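/- Parseval-type equality: let f : ℝ → ℂ be 2π-periodic and Lebesgue integrable on [−π, π], and let g : ℝ → ℝ be 2π-periodic with bounded variation. Then ∫_{−π}^{π} f(t) g(t) dt = lim_{n→∞} (1/(2π)) Σ_{k=−n}^{n} (1 − |k|/(n+1)) f̂(k) ĝ(−k), where f̂(k) = ∫_{−π}^{π} f(t) e^{−ikt} dt and ĝ(k) = ∫_{−π}^{π} g(t) e^{−ikt} dt (note ĝ(−k) is the complex conjugate of ĝ(k) since g is real-valued). -/

import Mathlib

open MeasureTheory Real Filter

/-- The variation of a `2π`-periodic function over a period. -/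
noncomputable def periodVariation (g : ℝ → ℝ) : ENNReal :=
  ⨆ a : ℝ, eVariationOn g (Set.Icc a (a + 2 * π))

section ParsevalAux
open MeasureTheory Real Filter Complex Finset

noncomputable def Dker (n : ℕ) (u : ℝ) : ℂ :=
  ∑ j ∈ Finset.range (n + 1), Complex.exp (Complex.I * (j : ℂ) * (u : ℂ))

noncomputable def Fker (n : ℕ) (u : ℝ) : ℝ := Complex.normSq (Dker n u) / (n + 1)

lemma card_pairs (n : ℕ) (k : ℤ) (hk : k ∈ Finset.Icc (-(n:ℤ)) n) :
    (((Finset.range (n+1)) ×ˢ (Finset.range (n+1))).filter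
      (fun p : ℕ × ℕ => (p.1 : ℤ) - (p.2 : ℤ) = k)).card = n + 1 - k.natAbs := by
  simp only [Finset.mem_Icc] at hk
  have himg : (((Finset.range (n+1)) ×ˢ (Finset.range (n+1))).filter
      (fun p : ℕ × ℕ => (p.1 : ℤ) - (p.2 : ℤ) = k)) =
      Finset.image (fun l : ℕ => (l + k.toNat, l + (-k).toNat))
        (Finset.range (n + 1 - k.natAbs)) := by
    ext ⟨a, b⟩
    simp only [Finset.mem_filter, Finset.mem_product, Finset.mem_range, Finset.mem_image,
      Prod.mk.injEq]
    constructor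
    · rintro ⟨⟨ha, hb⟩, hab⟩
      exact ⟨min a b, by omega, by omega, by omega⟩
    · rintro ⟨l, hl, rfl, rfl⟩
      refine ⟨⟨by omega, by omega⟩, by omega⟩
  rw [himg, Finset.card_image_of_injective _ (fun x y h => by simp only [Prod.mk.injEq] at h; omega),
    Finset.card_range]

lemma fejer_sum (n : ℕ) (u : ℝ) :
    ∑ k ∈ Finset.Icc (-(n:ℤ)) n,
      ((1 - |(k : ℝ)| / ((n : ℝ) + 1) : ℝ) : ℂ) * Complex.exp (Complex.I * (k : ℂ) * (u : ℂ))
      = (Fker n u : ℂ) := by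
  have key : ((Complex.normSq (Dker n u) : ℝ) : ℂ)
      = ∑ k ∈ Finset.Icc (-(n:ℤ)) n,
        ((n + 1 - k.natAbs : ℕ) : ℂ) * Complex.exp (Complex.I * (k : ℂ) * (u : ℂ)) := by
    rw [← Complex.mul_conj (Dker n u)]
    have : Dker n u * (starRingEnd ℂ) (Dker n u)
        = ∑ p ∈ (Finset.range (n+1)) ×ˢ (Finset.range (n+1)),
            Complex.exp (Complex.I * (((p.1 : ℤ) - (p.2 : ℤ) : ℤ) : ℂ) * (u : ℂ)) := by
      rw [Dker, map_sum, Finset.sum_mul_sum, ← Finset.sum_product']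
      refine Finset.sum_congr rfl fun p _ => ?_
      rw [← Complex.exp_conj, ← Complex.exp_add]
      congr 1
      simp [Complex.conj_I]
      push_cast
      ring
    rw [this, ← Finset.sum_fiberwise_of_maps_to
      (g := fun p : ℕ × ℕ => (p.1 : ℤ) - (p.2 : ℤ)) (t := Finset.Icc (-(n:ℤ)) n)
      (fun p hp => by
        simp only [Finset.mem_product, Finset.mem_range] at hp
        simp only [Finset.mem_Icc]; omega)]
    refine Finset.sum_congr rfl fun k hk => ?_
    rw [Finset.sum_congr rfl (fun p hp => show _ = Complex.exp (Complex.I * (k : ℂ) * (u : ℂ)) by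
        simp only [Finset.mem_filter] at hp
        rw [hp.2]), Finset.sum_const, card_pairs n k hk, nsmul_eq_mul]
  have hn1 : ((n : ℂ) + 1) ≠ 0 := by
    simpa using Nat.cast_add_one_ne_zero (R := ℂ) n
  rw [Fker]
  push_cast
  rw [eq_div_iff hn1, key, Finset.sum_mul]
  refine Finset.sum_congr rfl fun k hk => ?_
  simp only [Finset.mem_Icc] at hk
  have hnat : ((n + 1 - k.natAbs : ℕ) : ℂ) = (n : ℂ) + 1 - (k.natAbs : ℂ) := by
    have : k.natAbs ≤ n + 1 := by omega
    push_cast [Nat.cast_sub this]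
    ring
  have habs : |(k : ℝ)| = (k.natAbs : ℝ) := by
    rw [Nat.cast_natAbs, Int.cast_abs]
  rw [hnat, habs]
  field_simp
  norm_cast

lemma Fker_nonneg (n : ℕ) (u : ℝ) : 0 ≤ Fker n u :=
  div_nonneg (Complex.normSq_nonneg _) (by positivity)

lemma Fker_continuous (n : ℕ) : Continuous (Fker n) := by
  apply Continuous.div_const
  exact Complex.continuous_normSq.comp (continuous_finset_sum _ fun j _ =>
    Complex.continuous_exp.comp (by continuity))

lemma Dker_periodic (n : ℕ) : Function.Periodic (Dker n) (2 * π) := by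
  intro u
  unfold Dker
  refine Finset.sum_congr rfl fun j _ => ?_
  rw [show (Complex.I * (j : ℂ) * ((u + 2 * π : ℝ) : ℂ)) =
      Complex.I * (j : ℂ) * (u : ℂ) + (j : ℤ) * (2 * (π:ℂ) * Complex.I) by push_cast; ring,
    Complex.exp_add, Complex.exp_int_mul_two_pi_mul_I, mul_one]

lemma Fker_periodic (n : ℕ) : Function.Periodic (Fker n) (2 * π) := by
  intro u; unfold Fker; rw [Dker_periodic n u]

lemma integral_exp_I_int (k : ℤ) (hk : k ≠ 0) :
    ∫ u in (-π)..π, Complex.exp (Complex.I * (k : ℂ) * (u : ℂ)) = 0 := by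
  have hc : (Complex.I * (k : ℂ)) ≠ 0 := by
    simp [Complex.I_ne_zero, hk]
  rw [integral_exp_mul_complex hc]
  have : Complex.exp (Complex.I * (k:ℂ) * ((π:ℝ):ℂ)) =
      Complex.exp (Complex.I * (k:ℂ) * ((-π:ℝ):ℂ)) := by
    rw [show Complex.I * (k:ℂ) * ((π:ℝ):ℂ)
        = Complex.I * (k:ℂ) * ((-π:ℝ):ℂ) + (k:ℤ) * (2 * (π:ℂ) * Complex.I) by push_cast; ring,
      Complex.exp_add, Complex.exp_int_mul_two_pi_mul_I, mul_one]
  rw [this, sub_self, zero_div]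

lemma integral_Fker (n : ℕ) : ∫ u in (-π)..π, Fker n u = 2 * π := by
  have hC : ∫ u in (-π)..π, ((Fker n u : ℝ) : ℂ) = ((2 * π : ℝ) : ℂ) := by
    have hsum : ∀ u : ℝ, ((Fker n u : ℝ) : ℂ) = ∑ k ∈ Finset.Icc (-(n:ℤ)) n,
        ((1 - |(k : ℝ)| / ((n : ℝ) + 1) : ℝ) : ℂ) * Complex.exp (Complex.I * (k : ℂ) * (u : ℂ)) :=
      fun u => (fejer_sum n u).symm
    rw [intervalIntegral.integral_congr (fun u _ => hsum u),
      intervalIntegral.integral_finset_sum (fun k _ =>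
        (Continuous.intervalIntegrable (by fun_prop) _ _))]
    rw [Finset.sum_eq_single 0]
    · simp only [Int.cast_zero, mul_zero, zero_mul, Complex.exp_zero, abs_zero]
      rw [intervalIntegral.integral_const]
      push_cast [Complex.real_smul]
      ring
    · intro k _ hk
      rw [intervalIntegral.integral_const_mul, integral_exp_I_int k hk, mul_zero]
    · intro h
      exact absurd (by simp : (0:ℤ) ∈ Finset.Icc (-(n:ℤ)) n) h
  rw [intervalIntegral.integral_ofReal] at hC
  exact_mod_cast hC

lemma normSq_exp_sub_one (u : ℝ) :
    Complex.normSq (Complex.exp (Complex.I * (u : ℂ)) - 1) = 2 - 2 * Real.cos u := by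
  rw [mul_comm, Complex.exp_mul_I]
  simp only [Complex.normSq_apply, Complex.add_re, Complex.sub_re, Complex.add_im, Complex.sub_im,
    Complex.mul_re, Complex.mul_im, Complex.I_re, Complex.I_im, Complex.one_re, Complex.one_im,
    Complex.cos_ofReal_re, Complex.sin_ofReal_im, Complex.cos_ofReal_im, Complex.sin_ofReal_re]
  nlinarith [Real.sin_sq_add_cos_sq u]

lemma Fker_le {n : ℕ} {δ u : ℝ} (hδ : 0 < δ) (h1 : δ ≤ |u|) (h2 : |u| ≤ π) :
    Fker n u ≤ 4 / ((2 - 2 * Real.cos δ) * (n + 1)) := by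
  have hδπ : δ ≤ π := le_trans h1 h2
  have hcos : Real.cos δ < 1 := by
    calc Real.cos δ < Real.cos 0 := Real.cos_lt_cos_of_nonneg_of_le_pi le_rfl hδπ hδ
    _ = 1 := Real.cos_zero
  have hpos : 0 < 2 - 2 * Real.cos δ := by linarith
  set z : ℂ := Complex.exp (Complex.I * (u : ℂ)) with hz
  have hne : z ≠ 1 := by
    intro h
    rcases Complex.exp_eq_one_iff.mp h with ⟨m, hm⟩
    have hm' : Complex.I * (u:ℂ) = Complex.I * ((m:ℂ) * (2 * π)) := by rw [hm]; ring
    have hu : (u : ℂ) = (m : ℂ) * (2 * π) := mul_left_cancel₀ Complex.I_ne_zero hm'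
    have hu' : u = (m : ℝ) * (2 * π) := by exact_mod_cast hu
    have hune : u ≠ 0 := fun h0 => by rw [h0, abs_zero] at h1; linarith
    rcases lt_trichotomy m 0 with h'|h'|h'
    · have hm1 : m ≤ -1 := by omega
      have h1' : (m : ℝ) ≤ -1 := by exact_mod_cast hm1
      have : u ≤ -(2*π) := by nlinarith [Real.pi_pos]
      have := abs_le.mp h2
      nlinarith [Real.pi_pos]
    · rw [h'] at hu'; simp at hu'; exact hune hu'
    · have h1' : (1:ℝ) ≤ (m:ℝ) := by exact_mod_cast h'
      have : 2*π ≤ u := by nlinarith [Real.pi_pos]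
      have := abs_le.mp h2
      nlinarith [Real.pi_pos]
  have hDker : Dker n u = (z ^ (n+1) - 1) / (z - 1) := by
    rw [Dker, ← geom_sum_eq hne]
    refine Finset.sum_congr rfl fun j _ => ?_
    rw [hz, show Complex.I * (j:ℂ) * (u:ℂ) = (j:ℕ) * (Complex.I * (u:ℂ)) by push_cast; ring,
      Complex.exp_nat_mul]
  have habs1 : ‖z‖ = 1 := by rw [hz, mul_comm]; exact Complex.norm_exp_ofReal_mul_I u
  have hnum : Complex.normSq (z ^ (n+1) - 1) ≤ 4 := by
    have h2' : ‖z ^ (n+1) - 1‖ ≤ 2 := by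
      have := norm_sub_le (z ^ (n+1)) 1
      rw [norm_pow, habs1, one_pow, norm_one] at this
      linarith
    have h0 := Complex.sq_norm (z ^ (n+1) - 1)
    nlinarith [norm_nonneg (z ^ (n+1) - 1)]
  have hden : 2 - 2 * Real.cos δ ≤ Complex.normSq (z - 1) := by
    rw [hz, normSq_exp_sub_one]
    have : Real.cos u ≤ Real.cos δ := by
      rw [← Real.cos_abs u]
      exact Real.cos_le_cos_of_nonneg_of_le_pi (le_of_lt hδ) h2 h1
    linarith
  rw [Fker, hDker, Complex.normSq_div, div_div]
  apply div_le_div₀ (by norm_num) hnum (by positivity)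
  exact mul_le_mul_of_nonneg_right hden (by positivity)

section Creg
variable {g : ℝ → ℝ}

lemma bv_period (hgbv : periodVariation g ≠ ⊤) (a : ℝ) :
    eVariationOn g (Set.Icc a (a + 2 * π)) < ⊤ :=
  lt_of_le_of_lt (le_iSup (fun a => eVariationOn g (Set.Icc a (a + 2 * π))) a)
    (lt_top_iff_ne_top.mpr hgbv)

lemma bv_nperiods (hgbv : periodVariation g ≠ ⊤) (a : ℝ) (N : ℕ) :
    eVariationOn g (Set.Icc a (a + 2 * π * N)) < ⊤ := by
  induction N with
  | zero =>
    refine lt_of_le_of_lt (eVariationOn.mono g ?_) (bv_period hgbv a)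
    intro x hx
    simp only [Set.mem_Icc] at *
    exact ⟨hx.1, by push_cast at hx; linarith [hx.2, Real.two_pi_pos.le]⟩
  | succ N ih =>
    have hab : a ≤ a + 2 * π * N := le_add_of_nonneg_right (by positivity)
    have hbc : a + 2 * π * N ≤ a + 2 * π * (N + 1 : ℕ) := by
      push_cast; nlinarith [Real.two_pi_pos]
    have key := eVariationOn.Icc_add_Icc g (s := Set.univ) hab hbc (Set.mem_univ _)
    simp only [Set.univ_inter] at key
    have h2 : eVariationOn g (Set.Icc (a + 2 * π * N) (a + 2 * π * (N + 1 : ℕ))) < ⊤ := by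
      refine lt_of_le_of_lt (eVariationOn.mono g ?_) (bv_period hgbv (a + 2 * π * N))
      intro x hx
      simp only [Set.mem_Icc] at *
      exact ⟨hx.1, by push_cast at hx ⊢; linarith [hx.2]⟩
    rw [← key]
    exact ENNReal.add_lt_top.mpr ⟨ih, h2⟩

lemma lbv_univ (hgbv : periodVariation g ≠ ⊤) :
    LocallyBoundedVariationOn g Set.univ := by
  intro a b
  intro _ _
  rw [BoundedVariationOn, Set.univ_inter, ← lt_top_iff_ne_top]
  obtain ⟨N, hN⟩ := exists_nat_ge ((b - a) / (2 * π))
  refine lt_of_le_of_lt (eVariationOn.mono g ?_) (bv_nperiods hgbv a N)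
  intro x hx
  simp only [Set.mem_Icc] at *
  refine ⟨hx.1, hx.2.trans ?_⟩
  rw [div_le_iff₀ Real.two_pi_pos] at hN
  linarith

lemma g_measurable (hgbv : periodVariation g ≠ ⊤) : Measurable g := by
  obtain ⟨p, q, hp, hq, hpq⟩ := (lbv_univ hgbv).exists_monotoneOn_sub_monotoneOn
  rw [hpq]
  exact ((monotoneOn_univ.mp hp).measurable).sub ((monotoneOn_univ.mp hq).measurable)

lemma g_ae_continuous (hgbv : periodVariation g ≠ ⊤) :
    ∀ᵐ t : ℝ, ContinuousAt g t := by
  filter_upwards [(lbv_univ hgbv).ae_differentiableAt] with t ht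
  exact ht.continuousAt

lemma g_bounded (hgper : Function.Periodic g (2 * π)) (hgbv : periodVariation g ≠ ⊤) :
    ∃ M : ℝ, 0 ≤ M ∧ ∀ x, |g x| ≤ M := by
  set V : ℝ := (eVariationOn g (Set.Icc 0 (0 + 2 * π))).toReal with hV
  refine ⟨|g 0| + V, by positivity, fun x => ?_⟩
  obtain ⟨y, hy, hxy⟩ := hgper.exists_mem_Ico₀ Real.two_pi_pos x
  have h0 : (0:ℝ) ∈ Set.Icc (0:ℝ) (0 + 2 * π) := by
    constructor <;> simp [Real.two_pi_pos.le]
  have hy' : y ∈ Set.Icc (0:ℝ) (0 + 2 * π) := by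
    simp only [Set.mem_Ico] at hy
    exact ⟨hy.1, by linarith [hy.2]⟩
  have hd : dist (g y) (g 0) ≤ V :=
    BoundedVariationOn.dist_le (bv_period hgbv 0).ne hy' h0
  rw [hxy]
  rw [Real.dist_eq] at hd
  calc |g y| = |g y - g 0 + g 0| := by ring_nf
    _ ≤ |g y - g 0| + |g 0| := abs_add_le _ _
    _ ≤ |g 0| + V := by linarith
lemma g_intervalIntegrable (hgper : Function.Periodic g (2 * π))
    (hgbv : periodVariation g ≠ ⊤) (a b : ℝ) : IntervalIntegrable g volume a b := by
  obtain ⟨M, _, hM⟩ := g_bounded hgper hgbv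
  rw [intervalIntegrable_iff]
  have hc : IntegrableOn (fun _ : ℝ => M) (Set.uIoc a b) volume :=
    integrableOn_const measure_Ioc_lt_top.ne
  refine hc.mono' ((g_measurable hgbv).aestronglyMeasurable.restrict) ?_
  filter_upwards with x using hM x

end Creg

lemma intInt_bdd_mul_cont {h : ℝ → ℝ} (hm : Measurable h) {M : ℝ}
    (hb : ∀ x, |h x| ≤ M) {k : ℝ → ℝ} (hk : Continuous k) (a b : ℝ) :
    IntervalIntegrable (fun u => h u * k u) volume a b := by
  rw [intervalIntegrable_iff]
  exact MeasureTheory.Integrable.bdd_mul (intervalIntegrable_iff.mp (hk.intervalIntegrable a b))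
    hm.aestronglyMeasurable.restrict (c := M) (ae_of_all _ fun x => by simpa using hb x)

lemma intInt_bdd_mul_contC {h : ℝ → ℝ} (hm : Measurable h) {M : ℝ}
    (hb : ∀ x, |h x| ≤ M) {k : ℝ → ℂ} (hk : Continuous k) (a b : ℝ) :
    IntervalIntegrable (fun u => (h u : ℂ) * k u) volume a b := by
  rw [intervalIntegrable_iff]
  refine MeasureTheory.Integrable.bdd_mul (intervalIntegrable_iff.mp (hk.intervalIntegrable a b))
    ((Complex.measurable_ofReal.comp hm).aestronglyMeasurable.restrict) (c := M) (ae_of_all _ fun x => ?_)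
  simpa using hb x

noncomputable def qfun (g : ℝ → ℝ) (n : ℕ) (t : ℝ) : ℝ :=
  ∫ u in (-π)..π, g (u + t) * Fker n u

section core
variable {g : ℝ → ℝ}

lemma qfun_eq (hgper : Function.Periodic g (2 * π)) (n : ℕ) (t : ℝ) :
    (∫ s in (-π)..π, g s * Fker n (s - t)) = qfun g n t := by
  have h1 : (∫ x in (-π - t)..(π - t), g (x + t) * Fker n x)
      = ∫ s in (-π)..π, g s * Fker n (s - t) := by
    have := intervalIntegral.integral_comp_add_right (a := -π - t) (b := π - t)
      (fun s => g s * Fker n (s - t)) t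
    simpa using this
  have P : Function.Periodic (fun u => g (u + t) * Fker n u) (2 * π) := by
    intro u
    beta_reduce
    rw [show u + 2 * π + t = u + t + 2 * π by ring, hgper (u + t), Fker_periodic n u]
  have h2 : (∫ u in (-π - t)..(π - t), g (u + t) * Fker n u)
      = ∫ u in (-π)..π, g (u + t) * Fker n u := by
    have := P.intervalIntegral_add_eq (-π - t) (-π)
    rw [show -π - t + 2 * π = π - t by ring, show -π + 2 * π = π by ring] at this
    exact this
  rw [← h1, h2, qfun]

lemma sum_eq_q (hgper : Function.Periodic g (2 * π)) (hgbv : periodVariation g ≠ ⊤)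
    (n : ℕ) (t : ℝ) :
    (∑ k ∈ Finset.Icc (-(n : ℤ)) (n : ℤ),
        ((1 - |(k : ℝ)| / ((n : ℝ) + 1) : ℝ) : ℂ) *
          Complex.exp (-Complex.I * (k : ℂ) * (t : ℂ)) *
          (∫ s in (-π)..π, (g s : ℂ) * Complex.exp (-Complex.I * ((-k : ℤ) : ℂ) * (s : ℂ))))
      = ((qfun g n t : ℝ) : ℂ) := by
  obtain ⟨M, hM0, hM⟩ := g_bounded hgper hgbv
  have hgm := g_measurable hgbv
  have hterm : ∀ k ∈ Finset.Icc (-(n : ℤ)) (n : ℤ),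
      ((1 - |(k : ℝ)| / ((n : ℝ) + 1) : ℝ) : ℂ) *
          Complex.exp (-Complex.I * (k : ℂ) * (t : ℂ)) *
          (∫ s in (-π)..π, (g s : ℂ) * Complex.exp (-Complex.I * ((-k : ℤ) : ℂ) * (s : ℂ)))
        = ∫ s in (-π)..π, (g s : ℂ) *
            (((1 - |(k : ℝ)| / ((n : ℝ) + 1) : ℝ) : ℂ) *
              Complex.exp (Complex.I * (k : ℂ) * ((s - t : ℝ) : ℂ))) := by
    intro k _
    rw [← intervalIntegral.integral_const_mul]
    refine intervalIntegral.integral_congr fun s _ => ?_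
    beta_reduce
    have hexp : Complex.exp (-Complex.I * (k : ℂ) * (t : ℂ)) *
        Complex.exp (-Complex.I * ((-k : ℤ) : ℂ) * (s : ℂ))
        = Complex.exp (Complex.I * (k : ℂ) * ((s - t : ℝ) : ℂ)) := by
      rw [← Complex.exp_add]
      congr 1
      push_cast
      ring
    calc ((1 - |(k : ℝ)| / ((n : ℝ) + 1) : ℝ) : ℂ) *
          Complex.exp (-Complex.I * (k : ℂ) * (t : ℂ)) *
          ((g s : ℂ) * Complex.exp (-Complex.I * ((-k : ℤ) : ℂ) * (s : ℂ)))
        = (g s : ℂ) * (((1 - |(k : ℝ)| / ((n : ℝ) + 1) : ℝ) : ℂ) *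
            (Complex.exp (-Complex.I * (k : ℂ) * (t : ℂ)) *
              Complex.exp (-Complex.I * ((-k : ℤ) : ℂ) * (s : ℂ)))) := by ring
      _ = _ := by rw [hexp]
  rw [Finset.sum_congr rfl hterm, ← intervalIntegral.integral_finset_sum (fun k _ =>
    intInt_bdd_mul_contC hgm hM (by fun_prop) _ _)]
  have hpt : ∀ s : ℝ, (∑ k ∈ Finset.Icc (-(n : ℤ)) (n : ℤ), (g s : ℂ) *
      (((1 - |(k : ℝ)| / ((n : ℝ) + 1) : ℝ) : ℂ) *
        Complex.exp (Complex.I * (k : ℂ) * ((s - t : ℝ) : ℂ))))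
      = ((g s * Fker n (s - t) : ℝ) : ℂ) := by
    intro s
    rw [← Finset.mul_sum, fejer_sum n (s - t)]
    push_cast
    ring
  rw [intervalIntegral.integral_congr (fun s _ => hpt s), intervalIntegral.integral_ofReal,
    qfun_eq hgper n t]

lemma q_tendsto (hgbv : periodVariation g ≠ ⊤)
    {M : ℝ} (hM0 : 0 ≤ M) (hM : ∀ x, |g x| ≤ M) {t : ℝ} (hct : ContinuousAt g t) :
    Tendsto (fun n : ℕ => qfun g n t) atTop (nhds (2 * π * g t)) := by
  have hgm := g_measurable hgbv
  have hgm' : Measurable fun u => g (u + t) - g t :=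
    (hgm.comp (measurable_add_const t)).sub measurable_const
  have hgb' : ∀ u, |g (u + t) - g t| ≤ 2 * M := fun u => by
    calc |g (u + t) - g t| ≤ |g (u + t)| + |g t| := abs_sub _ _
      _ ≤ 2 * M := by linarith [hM (u + t), hM t]
  rw [Metric.tendsto_atTop]
  intro ε hε
  have hπ := Real.pi_pos
  set ε' := ε / (2 * (2 * π + 1)) with hε'def
  have hε'pos : 0 < ε' := by positivity
  obtain ⟨δ0, hδ0, hδ0c⟩ := Metric.continuousAt_iff.mp hct ε' hε'pos
  set δ := min (δ0 / 2) π with hδdef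
  have hδpos : 0 < δ := lt_min (by linarith) hπ
  have hδπ : δ ≤ π := min_le_right _ _
  have hδδ0 : δ < δ0 := lt_of_le_of_lt (min_le_left _ _) (by linarith)
  have hcos : Real.cos δ < 1 := by
    calc Real.cos δ < Real.cos 0 := Real.cos_lt_cos_of_nonneg_of_le_pi le_rfl hδπ hδpos
    _ = 1 := Real.cos_zero
  have hcpos : 0 < 2 - 2 * Real.cos δ := by linarith
  -- tail bound sequence
  set B : ℕ → ℝ := fun n => 4 / ((2 - 2 * Real.cos δ) * (n + 1)) with hBdef
  have hBpos : ∀ n, 0 ≤ B n := fun n => by positivity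
  have hBtend : Tendsto (fun n : ℕ => 2 * (2 * M * B n * π)) atTop (nhds 0) := by
    have h1 : (fun n : ℕ => 2 * (2 * M * B n * π))
        = fun n : ℕ => (2 * (2 * M * π) * (4 / (2 - 2 * Real.cos δ))) * (1 / ((n : ℝ) + 1)) := by
      funext n
      rw [hBdef]
      field_simp
    rw [h1, show (0:ℝ) = (2 * (2 * M * π) * (4 / (2 - 2 * Real.cos δ))) * 0 by ring]
    exact (tendsto_one_div_add_atTop_nhds_zero_nat).const_mul _
  have hev : ∀ᶠ n : ℕ in atTop, 2 * (2 * M * B n * π) < ε / 2 :=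
    hBtend.eventually_lt_const (by linarith)
  obtain ⟨N, hN⟩ := eventually_atTop.mp hev
  refine ⟨N, fun n hn => ?_⟩
  -- the error integral
  have hφint : ∀ a b : ℝ, IntervalIntegrable
      (fun u => (g (u + t) - g t) * Fker n u) volume a b :=
    fun a b => intInt_bdd_mul_cont hgm' hgb' (Fker_continuous n) a b
  have hgtint : ∀ a b : ℝ, IntervalIntegrable (fun u => g (u + t) * Fker n u) volume a b :=
    fun a b => intInt_bdd_mul_cont (hgm.comp (measurable_add_const t)) (fun x => hM _)
      (Fker_continuous n) a b
  have hE : qfun g n t - 2 * π * g t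
      = ∫ u in (-π)..π, (g (u + t) - g t) * Fker n u := by
    have hsub : ∀ u : ℝ, (g (u + t) - g t) * Fker n u
        = g (u + t) * Fker n u - g t * Fker n u := fun u => by ring
    rw [intervalIntegral.integral_congr (fun u _ => hsub u), intervalIntegral.integral_sub
      (hgtint _ _) (((Fker_continuous n).intervalIntegrable _ _).const_mul _),
      intervalIntegral.integral_const_mul, integral_Fker, qfun]
    ring
  -- split the integral
  have hsplit : (∫ u in (-π)..π, (g (u + t) - g t) * Fker n u)
      = (∫ u in (-π)..(-δ), (g (u + t) - g t) * Fker n u)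
        + (∫ u in (-δ)..δ, (g (u + t) - g t) * Fker n u)
        + (∫ u in δ..π, (g (u + t) - g t) * Fker n u) := by
    rw [intervalIntegral.integral_add_adjacent_intervals (hφint (-π) (-δ)) (hφint (-δ) δ),
      intervalIntegral.integral_add_adjacent_intervals (hφint (-π) δ) (hφint δ π)]
  -- middle bound
  have hmid : |∫ u in (-δ)..δ, (g (u + t) - g t) * Fker n u| ≤ ε' * (2 * π) := by
    calc |∫ u in (-δ)..δ, (g (u + t) - g t) * Fker n u|
        ≤ ∫ u in (-δ)..δ, |(g (u + t) - g t) * Fker n u| :=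
          intervalIntegral.abs_integral_le_integral_abs (by linarith)
      _ ≤ ∫ u in (-δ)..δ, ε' * Fker n u := by
          refine intervalIntegral.integral_mono_on (by linarith) (hφint _ _).abs
            (((Fker_continuous n).intervalIntegrable _ _).const_mul _) fun u hu => ?_
          rw [abs_mul, _root_.abs_of_nonneg (Fker_nonneg n u)]
          refine mul_le_mul_of_nonneg_right ?_ (Fker_nonneg n u)
          have : dist (u + t) t < δ0 := by
            rw [Real.dist_eq, add_sub_cancel_right]
            rcases hu with ⟨h1, h2⟩
            rw [abs_lt]; constructor <;> [linarith; linarith]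
          exact le_of_lt (by simpa [Real.dist_eq] using hδ0c this)
      _ ≤ ∫ u in (-π)..π, ε' * Fker n u := by
          refine intervalIntegral.integral_mono_interval (by linarith) (by linarith) hδπ
            ?_ (((Fker_continuous n).intervalIntegrable _ _).const_mul _)
          filter_upwards with u
          exact mul_nonneg hε'pos.le (Fker_nonneg n u)
      _ = ε' * (2 * π) := by rw [intervalIntegral.integral_const_mul, integral_Fker]
  -- tail bounds
  have htailbound : ∀ u : ℝ, δ ≤ |u| → |u| ≤ π → |(g (u + t) - g t) * Fker n u| ≤ 2 * M * B n := by
    intro u h1 h2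
    rw [abs_mul, _root_.abs_of_nonneg (Fker_nonneg n u)]
    exact mul_le_mul (hgb' u) (Fker_le hδpos h1 h2) (Fker_nonneg n u) (by linarith)
  have htail1 : |∫ u in δ..π, (g (u + t) - g t) * Fker n u| ≤ 2 * M * B n * π := by
    have := intervalIntegral.norm_integral_le_of_norm_le_const (C := 2 * M * B n)
      (f := fun u => (g (u + t) - g t) * Fker n u) (a := δ) (b := π) (fun u hu => by
        rw [Set.uIoc_of_le hδπ] at hu
        rw [Real.norm_eq_abs]
        exact htailbound u (by rw [abs_of_pos (lt_trans hδpos hu.1)]; exact hu.1.le)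
          (by rw [abs_of_pos (lt_trans hδpos hu.1)]; exact hu.2))
    rw [Real.norm_eq_abs] at this
    refine this.trans ?_
    rw [_root_.abs_of_nonneg (by linarith : (0:ℝ) ≤ π - δ)]
    have h0 : 0 ≤ 2 * M * B n := by positivity
    nlinarith
  have htail2 : |∫ u in (-π)..(-δ), (g (u + t) - g t) * Fker n u| ≤ 2 * M * B n * π := by
    have hle : -π ≤ -δ := by linarith
    have := intervalIntegral.norm_integral_le_of_norm_le_const (C := 2 * M * B n)
      (f := fun u => (g (u + t) - g t) * Fker n u) (a := -π) (b := -δ) (fun u hu => by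
        rw [Set.uIoc_of_le hle] at hu
        rw [Real.norm_eq_abs]
        have hu1 : u < 0 := lt_of_le_of_lt hu.2 (by linarith)
        exact htailbound u (by rw [abs_of_neg hu1]; linarith [hu.2])
          (by rw [abs_of_neg hu1]; linarith [hu.1]))
    rw [Real.norm_eq_abs] at this
    refine this.trans ?_
    rw [_root_.abs_of_nonneg (by linarith : (0:ℝ) ≤ -δ - -π)]
    have h0 : 0 ≤ 2 * M * B n := by positivity
    nlinarith
  -- assemble
  rw [Real.dist_eq, hE, hsplit]
  have habs : |(∫ u in (-π)..(-δ), (g (u + t) - g t) * Fker n u)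
        + (∫ u in (-δ)..δ, (g (u + t) - g t) * Fker n u)
        + (∫ u in δ..π, (g (u + t) - g t) * Fker n u)|
      ≤ 2 * M * B n * π + ε' * (2 * π) + 2 * M * B n * π := by
    calc _ ≤ |(∫ u in (-π)..(-δ), (g (u + t) - g t) * Fker n u)
          + (∫ u in (-δ)..δ, (g (u + t) - g t) * Fker n u)|
          + |∫ u in δ..π, (g (u + t) - g t) * Fker n u| := abs_add_le _ _
      _ ≤ |(∫ u in (-π)..(-δ), (g (u + t) - g t) * Fker n u)|
          + |(∫ u in (-δ)..δ, (g (u + t) - g t) * Fker n u)|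
          + |∫ u in δ..π, (g (u + t) - g t) * Fker n u| := by
            have := abs_add_le (∫ u in (-π)..(-δ), (g (u + t) - g t) * Fker n u)
              (∫ u in (-δ)..δ, (g (u + t) - g t) * Fker n u)
            linarith
      _ ≤ _ := by linarith [htail1, htail2, hmid]
  refine lt_of_le_of_lt habs ?_
  have hN' := hN n hn
  have hε'small : ε' * (2 * π) < ε / 2 := by
    rw [hε'def]
    rw [div_mul_eq_mul_div, div_lt_div_iff₀ (by linarith) (by norm_num)]
    nlinarith
  linarith
end core

end ParsevalAux

/-- Parseval-type equality: for `f ∈ L¹(𝕋)` and `g` of bounded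
variation, `∫ fg = lim_n (1/2π) Σ_{|k|≤n} (1 − |k|/(n+1)) f̂(k) ĝ(−k)`. -/
theorem parseval_type_equality (f : ℝ → ℂ) (g : ℝ → ℝ)
    (hfper : Function.Periodic f (2 * π))
    (hfint : IntervalIntegrable f volume (-π) π)
    (hgper : Function.Periodic g (2 * π))
    (hgbv : periodVariation g ≠ ⊤) :
    Tendsto (fun n : ℕ =>
        (1 / (2 * (π : ℂ))) * ∑ k ∈ Finset.Icc (-(n : ℤ)) (n : ℤ),
          ((1 - |(k : ℝ)| / ((n : ℝ) + 1) : ℝ) : ℂ) *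
            (∫ t in (-π)..π, f t * Complex.exp (-Complex.I * (k : ℂ) * (t : ℂ))) *
            (∫ t in (-π)..π, (g t : ℂ) * Complex.exp (-Complex.I * ((-k : ℤ) : ℂ) * (t : ℂ))))
      atTop (nhds (∫ t in (-π)..π, f t * (g t : ℂ))) := by
  have hπ := Real.pi_pos
  obtain ⟨M, hM0, hM⟩ := g_bounded hgper hgbv
  have hgm := g_measurable hgbv
  set G : ℤ → ℂ := fun k =>
    ∫ s in (-π)..π, (g s : ℂ) * Complex.exp (-Complex.I * ((-k : ℤ) : ℂ) * (s : ℂ)) with hG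
  -- Step 1: rewrite the partial sums as integrals against the Fejér mean of g
  have hstep : ∀ n : ℕ,
      (1 / (2 * (π : ℂ))) * ∑ k ∈ Finset.Icc (-(n : ℤ)) (n : ℤ),
          ((1 - |(k : ℝ)| / ((n : ℝ) + 1) : ℝ) : ℂ) *
            (∫ t in (-π)..π, f t * Complex.exp (-Complex.I * (k : ℂ) * (t : ℂ))) * G k
        = ∫ t in (-π)..π, f t * ((1 / (2 * π) * qfun g n t : ℝ) : ℂ) := by
    intro n
    have hterm : ∀ k ∈ Finset.Icc (-(n : ℤ)) (n : ℤ),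
        ((1 - |(k : ℝ)| / ((n : ℝ) + 1) : ℝ) : ℂ) *
            (∫ t in (-π)..π, f t * Complex.exp (-Complex.I * (k : ℂ) * (t : ℂ))) * G k
          = ∫ t in (-π)..π, f t * Complex.exp (-Complex.I * (k : ℂ) * (t : ℂ)) *
              (((1 - |(k : ℝ)| / ((n : ℝ) + 1) : ℝ) : ℂ) * G k) := by
      intro k _
      calc ((1 - |(k : ℝ)| / ((n : ℝ) + 1) : ℝ) : ℂ) *
            (∫ t in (-π)..π, f t * Complex.exp (-Complex.I * (k : ℂ) * (t : ℂ))) * G k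
          = (∫ t in (-π)..π, f t * Complex.exp (-Complex.I * (k : ℂ) * (t : ℂ))) *
            (((1 - |(k : ℝ)| / ((n : ℝ) + 1) : ℝ) : ℂ) * G k) := by ring
        _ = ∫ t in (-π)..π, (f t * Complex.exp (-Complex.I * (k : ℂ) * (t : ℂ))) *
            (((1 - |(k : ℝ)| / ((n : ℝ) + 1) : ℝ) : ℂ) * G k) :=
              (intervalIntegral.integral_mul_const _ _).symm
    rw [Finset.sum_congr rfl hterm, ← intervalIntegral.integral_finset_sum (fun (k : ℤ) _ =>
      (hfint.mul_continuousOn (Continuous.continuousOn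
        (show Continuous fun t : ℝ => Complex.exp (-Complex.I * (k : ℂ) * (t : ℂ)) from
          Complex.continuous_exp.comp (continuous_const.mul Complex.continuous_ofReal)))).mul_const
        (((1 - |(k : ℝ)| / ((n : ℝ) + 1) : ℝ) : ℂ) * G k))]
    rw [← intervalIntegral.integral_const_mul]
    refine intervalIntegral.integral_congr fun t _ => ?_
    beta_reduce
    have hre : ∀ k ∈ Finset.Icc (-(n : ℤ)) (n : ℤ),
        f t * Complex.exp (-Complex.I * (k : ℂ) * (t : ℂ)) *
            (((1 - |(k : ℝ)| / ((n : ℝ) + 1) : ℝ) : ℂ) * G k)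
          = f t * (((1 - |(k : ℝ)| / ((n : ℝ) + 1) : ℝ) : ℂ) *
              Complex.exp (-Complex.I * (k : ℂ) * (t : ℂ)) * G k) := fun k _ => by ring
    rw [Finset.sum_congr rfl hre, ← Finset.mul_sum, sum_eq_q hgper hgbv n t]
    push_cast
    ring
  -- uniform bound for the Fejér means
  have hqbound : ∀ (n : ℕ) (t : ℝ), |qfun g n t| ≤ 2 * π * M := by
    intro n t
    have hint1 : IntervalIntegrable (fun u => g (u + t) * Fker n u) volume (-π) π :=
      intInt_bdd_mul_cont (hgm.comp (measurable_add_const t)) (fun x => hM _)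
        (Fker_continuous n) _ _
    calc |qfun g n t| ≤ ∫ u in (-π)..π, |g (u + t) * Fker n u| :=
          intervalIntegral.abs_integral_le_integral_abs (by linarith)
      _ ≤ ∫ u in (-π)..π, M * Fker n u := by
          refine intervalIntegral.integral_mono_on (by linarith) hint1.abs
            (((Fker_continuous n).intervalIntegrable _ _).const_mul _) fun u _ => ?_
          rw [abs_mul, _root_.abs_of_nonneg (Fker_nonneg n u)]
          exact mul_le_mul_of_nonneg_right (hM _) (Fker_nonneg n u)
      _ = 2 * π * M := by
          rw [intervalIntegral.integral_const_mul, integral_Fker]; ring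
  have hrbound : ∀ (n : ℕ) (t : ℝ), |1 / (2 * π) * qfun g n t| ≤ M := by
    intro n t
    rw [abs_mul, abs_div, abs_one, _root_.abs_of_nonneg (by linarith : (0:ℝ) ≤ 2 * π)]
    rw [div_mul_eq_mul_div, one_mul, div_le_iff₀ (by linarith)]
    calc |qfun g n t| ≤ 2 * π * M := hqbound n t
      _ = M * (2 * π) := by ring
  -- rewrite the sequence
  have hfun : (fun n : ℕ =>
      (1 / (2 * (π : ℂ))) * ∑ k ∈ Finset.Icc (-(n : ℤ)) (n : ℤ),
        ((1 - |(k : ℝ)| / ((n : ℝ) + 1) : ℝ) : ℂ) *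
          (∫ t in (-π)..π, f t * Complex.exp (-Complex.I * (k : ℂ) * (t : ℂ))) * G k)
      = fun n : ℕ => ∫ t in (-π)..π, f t * ((1 / (2 * π) * qfun g n t : ℝ) : ℂ) :=
    funext hstep
  rw [show (fun n : ℕ =>
      (1 / (2 * (π : ℂ))) * ∑ k ∈ Finset.Icc (-(n : ℤ)) (n : ℤ),
        ((1 - |(k : ℝ)| / ((n : ℝ) + 1) : ℝ) : ℂ) *
          (∫ t in (-π)..π, f t * Complex.exp (-Complex.I * (k : ℂ) * (t : ℂ))) *
          (∫ t in (-π)..π, (g t : ℂ) *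
            Complex.exp (-Complex.I * ((-k : ℤ) : ℂ) * (t : ℂ)))) =
      fun n : ℕ => ∫ t in (-π)..π, f t * ((1 / (2 * π) * qfun g n t : ℝ) : ℂ) from hfun]
  -- dominated convergence
  have hfmeas : AEStronglyMeasurable f (volume.restrict (Set.uIoc (-π) π)) :=
    (intervalIntegrable_iff.mp hfint).aestronglyMeasurable
  have hqcont : ∀ n : ℕ, Continuous (fun t : ℝ => ((1 / (2 * π) * qfun g n t : ℝ) : ℂ)) := by
    intro n
    have heq : (fun t : ℝ => ((1 / (2 * π) * qfun g n t : ℝ) : ℂ))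
        = fun t : ℝ => (1 / (2 * (π:ℂ))) * ∑ k ∈ Finset.Icc (-(n : ℤ)) (n : ℤ),
            ((1 - |(k : ℝ)| / ((n : ℝ) + 1) : ℝ) : ℂ) *
              Complex.exp (-Complex.I * (k : ℂ) * (t : ℂ)) * G k := by
      funext t
      rw [sum_eq_q hgper hgbv n t]
      push_cast
      ring
    rw [heq]
    exact continuous_const.mul (continuous_finset_sum _ fun k _ =>
      ((continuous_const.mul (Complex.continuous_exp.comp
        (continuous_const.mul Complex.continuous_ofReal))).mul continuous_const))
  apply intervalIntegral.tendsto_integral_filter_of_dominated_convergence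
    (fun t => ‖f t‖ * M)
  · filter_upwards with n
    exact hfmeas.mul ((hqcont n).aestronglyMeasurable.restrict)
  · filter_upwards with n
    filter_upwards with t _
    rw [norm_mul, Complex.norm_real, Real.norm_eq_abs]
    exact mul_le_mul_of_nonneg_left (hrbound n t) (norm_nonneg _)
  · exact hfint.norm.mul_const M
  · filter_upwards [g_ae_continuous hgbv] with t hct _
    have h1 : Tendsto (fun n : ℕ => 1 / (2 * π) * qfun g n t) atTop (nhds (g t)) := by
      have := (q_tendsto hgbv hM0 hM hct).const_mul (1 / (2 * π))
      rw [show 1 / (2 * π) * (2 * π * g t) = g t by field_simp] at this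
      exact this
    have h2 : Tendsto (fun n : ℕ => ((1 / (2 * π) * qfun g n t : ℝ) : ℂ)) atTop
        (nhds ((g t : ℂ))) := (Complex.continuous_ofReal.tendsto _).comp h1
    exact h2.const_mul (f t)
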